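/- arXiv:1307.5709 — 5 statements merged into one kernel-verified Lean document; each statement's English description precedes it below -/
import Mathlib

section
/- In the T-convex setting with (A3'), let μ_l be a sequence of finitely supported (discrete) Radon measures on Y converging weakly to a Radon measure μ, with μ_l(Y) = ω(X) for all l. For each l let ρ_l ∈ F be of the form ρ_l = max_{1≤i≤N_l} h_{bᵢˡ,pᵢˡ} and satisfy M_{T(ρ_l)} = μ_l. Assume there exists R₀ > 0 with R₀ in the range of ρ_l for every l and R₀ < lim_{t→α_y⁺} h_{t,y}(x) for all x ∈ X, y ∈ Y, and: (i) for each R₁ > 0 there is C_{R₁} > 0 such that whenever R₁ is in the range of some h_{t,y}, then C_{R₁}⁻¹ ≤ h_{t,y} ≤ C_{R₁} on X; (ii) for any C₁ > C₀ > 0 the family {f ∈ F : C₀ ≤ f ≤ C₁ on X} is compact in C(X). Then there exists ρ ∈ F with M_{T(ρ)} = μ. -/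
open Filter MeasureTheory Topology

/-- `Φ⁻¹(E) = {x : Φ(x) ∩ E ≠ ∅}` for a set-valued map `Φ`. -/
def SVPreimage {X Y : Type*} (Φ : X → Set Y) (E : Set Y) : Set X :=
  {x | (Φ x ∩ E).Nonempty}

/-- Continuity of a set-valued map at a point. -/
def SVContinuousAt {X Y : Type*} [TopologicalSpace X] [TopologicalSpace Y]
    (Φ : X → Set Y) (x₀ : X) : Prop :=
  ∀ (xk : ℕ → X) (yk : ℕ → Y), Tendsto xk atTop (nhds x₀) → (∀ k, yk k ∈ Φ (xk k)) →
    ∃ (s : ℕ → ℕ) (y₀ : Y), StrictMono s ∧ y₀ ∈ Φ x₀ ∧ Tendsto (yk ∘ s) atTop (nhds y₀)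

/-- `Φ ∈ C_s(X,Y)`: nonempty values, continuous everywhere, single-valued `ω`-a.e.,
and surjective. -/
def IsCs {X Y : Type*} [TopologicalSpace X] [TopologicalSpace Y] [MeasurableSpace X]
    (ω : Measure X) (Φ : X → Set Y) : Prop :=
  (∀ x, (Φ x).Nonempty) ∧ (∀ x, SVContinuousAt Φ x) ∧
    (∀ᵐ x ∂ω, ∃ y, Φ x = {y}) ∧ (⋃ x, Φ x) = Set.univ

/-- Continuity of `T : F → C_s(X,Y)` at `φ ∈ F` (Definition 2.2). -/
def TContinuousAt {X Y : Type*} [TopologicalSpace X] [TopologicalSpace Y]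
    (F : Set C(X, ℝ)) (T : C(X, ℝ) → X → Set Y) (φ : C(X, ℝ)) : Prop :=
  ∀ φs : ℕ → C(X, ℝ), (∀ j, φs j ∈ F) →
    TendstoUniformly (fun j x => φs j x) (fun x => φ x) atTop →
    ∀ (x₀ : X) (ys : ℕ → Y), (∀ j, ys j ∈ T (φs j) x₀) →
      ∃ (s : ℕ → ℕ) (y₀ : Y), StrictMono s ∧ y₀ ∈ T φ x₀ ∧ Tendsto (ys ∘ s) atTop (nhds y₀)

/-- Theorem 2.11 (convex case, general target measure, by approximation). -/
theorem stmt7 {X Y : Type*} [MetricSpace X] [CompactSpace X] [MetricSpace Y] [CompactSpace Y]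
    [MeasurableSpace X] [BorelSpace X] [MeasurableSpace Y] [BorelSpace Y]
    (ω : Measure X) [IsFiniteMeasure ω]
    (F : Set C(X, ℝ)) (T : C(X, ℝ) → X → Set Y)
    (α β : Y → EReal) (h : ℝ → Y → C(X, ℝ))
    -- F ⊆ C⁺(X)
    (hFpos : ∀ f ∈ F, ∀ x, 0 < f x)
    -- (A1')
    (hA1 : ∀ f₁ ∈ F, ∀ f₂ ∈ F, f₁ ⊔ f₂ ∈ F)
    -- T maps F into C_s(X,Y)
    (hTCs : ∀ f ∈ F, IsCs ω (T f))
    -- T is continuous at each φ ∈ F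
    (hTcont : ∀ φ ∈ F, TContinuousAt F T φ)
    -- (A2')
    (hA2 : ∀ φ₁ ∈ F, ∀ φ₂ ∈ F, ∀ x₀ : X, φ₂ x₀ ≤ φ₁ x₀ → T φ₁ x₀ ⊆ T (φ₁ ⊔ φ₂) x₀)
    -- (A3')
    (hA3mem : ∀ (y : Y) (t : ℝ), α y < (t : EReal) → (t : EReal) < β y → h t y ∈ F)
    (hA3a : ∀ (y : Y) (t : ℝ), α y < (t : EReal) → (t : EReal) < β y → ∀ x : X, y ∈ T (h t y) x)
    (hA3b : ∀ (y : Y) (t s : ℝ), α y < (t : EReal) → (s : EReal) < β y → t ≤ s →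
      ∀ x, h s y x ≤ h t y x)
    (hA3c : ∀ (y : Y), ∀ ε : ℝ, 0 < ε → ∃ t₀ : ℝ, α y < (t₀ : EReal) ∧ (t₀ : EReal) < β y ∧
      ∀ t : ℝ, t₀ ≤ t → (t : EReal) < β y → ∀ x, h t y x < ε)
    (hA3d : ∀ (y : Y) (t : ℝ), α y < (t : EReal) → (t : EReal) < β y →
      ∀ ε : ℝ, 0 < ε → ∃ δ : ℝ, 0 < δ ∧ ∀ t' : ℝ, α y < (t' : EReal) → (t' : EReal) < β y →
        |t' - t| < δ → ∀ x, |h t' y x - h t y x| ≤ ε)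
    -- discrete measures μ_l converging weakly to μ with μ_l(Y) = ω(X)
    (μs : ℕ → Measure Y) (μ : Measure Y) [IsFiniteMeasure μ] [∀ l, IsFiniteMeasure (μs l)]
    (hdiscr : ∀ l, ∃ (m : ℕ) (q : Fin m → Y) (c : Fin m → ENNReal),
      μs l = ∑ i, c i • Measure.dirac (q i))
    (hweak : ∀ fc : C(Y, ℝ),
      Tendsto (fun l => ∫ y, fc y ∂(μs l)) atTop (nhds (∫ y, fc y ∂μ)))
    (hmassl : ∀ l, μs l Set.univ = ω Set.univ)
    -- solutions ρ_l = max_i h_{bᵢˡ,pᵢˡ} of M_{T(ρ_l)} = μ_l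
    (ρs : ℕ → C(X, ℝ)) (hρsF : ∀ l, ρs l ∈ F)
    (hρsform : ∀ l, ∃ (m : ℕ), 0 < m ∧ ∃ (q : Fin m → Y) (bb : Fin m → ℝ),
      (∀ i, α (q i) < (bb i : EReal) ∧ (bb i : EReal) < β (q i)) ∧
      ∀ x, ρs l x = ⨆ i, h (bb i) (q i) x)
    (hρssol : ∀ l, ∀ E : Set Y, MeasurableSet E → ω (SVPreimage (T (ρs l)) E) = μs l E)
    -- R₀ in the range of every ρ_l, with R₀ < lim_{t→α_y⁺} h_{t,y}(x)
    (R₀ : ℝ) (hR₀pos : 0 < R₀) (hR₀range : ∀ l, ∃ x, ρs l x = R₀)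
    (hR₀lim : ∀ (x : X) (y : Y), ∃ t : ℝ, α y < (t : EReal) ∧ (t : EReal) < β y ∧
      R₀ < h t y x)
    -- (i)
    (hi : ∀ R₁ : ℝ, 0 < R₁ → ∃ C : ℝ, 0 < C ∧ ∀ (y : Y) (t : ℝ),
      α y < (t : EReal) → (t : EReal) < β y → (∃ x, h t y x = R₁) →
      ∀ x, C⁻¹ ≤ h t y x ∧ h t y x ≤ C)
    -- (ii)
    (hii : ∀ C₀ C₁ : ℝ, 0 < C₀ → C₀ < C₁ →
      IsCompact {f : C(X, ℝ) | f ∈ F ∧ ∀ x, C₀ ≤ f x ∧ f x ≤ C₁}) :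
    ∃ ρ : C(X, ℝ), ρ ∈ F ∧ ∀ E : Set Y, MeasurableSet E → ω (SVPreimage (T ρ) E) = μ E := by
  classical
  -- Step 0: unpack the constant from hypothesis (i) at level R₀
  obtain ⟨C, hCpos, hC⟩ := hi R₀ hR₀pos
  -- Step 1: uniform bounds  C⁻¹ ≤ ρs l ≤ C
  have hbound : ∀ l, ∀ x, C⁻¹ ≤ ρs l x ∧ ρs l x ≤ C := by
    intro l
    obtain ⟨m, hm, q, bb, hαβ, hform⟩ := hρsform l
    obtain ⟨x₀, hx₀⟩ := hR₀range l
    haveI : Nonempty (Fin m) := ⟨⟨0, hm⟩⟩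
    -- the finite sup is attained at x₀
    obtain ⟨i₀, hi₀⟩ := Finite.exists_max (fun i : Fin m => h (bb i) (q i) x₀)
    have hsup0 : ρs l x₀ = h (bb i₀) (q i₀) x₀ := by
      rw [hform x₀]
      exact le_antisymm (ciSup_le hi₀)
        (le_ciSup (f := fun i => h (bb i) (q i) x₀) (Set.Finite.bddAbove (Set.finite_range _)) i₀)
    have hval0 : h (bb i₀) (q i₀) x₀ = R₀ := by rw [← hsup0, hx₀]
    have hbi₀ := hC (q i₀) (bb i₀) (hαβ i₀).1 (hαβ i₀).2 ⟨x₀, hval0⟩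
    -- each component value at x₀ is at most R₀
    have hcomp_le : ∀ i : Fin m, h (bb i) (q i) x₀ ≤ R₀ := by
      intro i; rw [← hval0]; exact hi₀ i
    -- upper bound for each component everywhere
    have hcomp_ub : ∀ (i : Fin m) (x : X), h (bb i) (q i) x ≤ C := by
      intro i x
      obtain ⟨t₁, ht₁α, ht₁β, ht₁R⟩ := hR₀lim x₀ (q i)
      have ht₁b : t₁ < bb i := by
        by_contra hcon
        push_neg at hcon
        have := hA3b (q i) (bb i) t₁ (hαβ i).1 ht₁β hcon x₀
        exact absurd (lt_of_lt_of_le ht₁R (le_trans this (hcomp_le i)))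
          (lt_irrefl R₀)
      -- IVT on [t₁, bb i] for t ↦ h t (q i) x₀
      have hIcc_sub : ∀ t ∈ Set.Icc t₁ (bb i),
          α (q i) < (t : EReal) ∧ (t : EReal) < β (q i) := by
        intro t ht
        exact ⟨lt_of_lt_of_le ht₁α (EReal.coe_le_coe_iff.2 ht.1),
          lt_of_le_of_lt (EReal.coe_le_coe_iff.2 ht.2) (hαβ i).2⟩
      have hcontOn : ContinuousOn (fun t => h t (q i) x₀) (Set.Icc t₁ (bb i)) := by
        intro t ht
        obtain ⟨htα, htβ⟩ := hIcc_sub t ht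
        rw [Metric.continuousWithinAt_iff]
        intro ε hε
        obtain ⟨δ, hδpos, hδ⟩ := hA3d (q i) t htα htβ (ε/2) (by linarith)
        refine ⟨δ, hδpos, fun t' ht' hd => ?_⟩
        obtain ⟨ht'α, ht'β⟩ := hIcc_sub t' ht'
        have := hδ t' ht'α ht'β (by rwa [Real.dist_eq] at hd) x₀
        rw [Real.dist_eq]
        calc |h t' (q i) x₀ - h t (q i) x₀| ≤ ε/2 := this
          _ < ε := by linarith
      have hmem : R₀ ∈ Set.Icc (h (bb i) (q i) x₀) (h t₁ (q i) x₀) :=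
        ⟨hcomp_le i, le_of_lt ht₁R⟩
      obtain ⟨t₂, ht₂mem, ht₂val⟩ :=
        intermediate_value_Icc' (le_of_lt ht₁b) hcontOn hmem
      obtain ⟨ht₂α, ht₂β⟩ := hIcc_sub t₂ ht₂mem
      have hb2 := hC (q i) t₂ ht₂α ht₂β ⟨x₀, ht₂val⟩
      calc h (bb i) (q i) x ≤ h t₂ (q i) x :=
            hA3b (q i) t₂ (bb i) ht₂α (hαβ i).2 ht₂mem.2 x
        _ ≤ C := (hb2 x).2
    intro x
    constructor
    · calc C⁻¹ ≤ h (bb i₀) (q i₀) x := (hbi₀ x).1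
        _ ≤ ρs l x := by
            rw [hform x]
            exact le_ciSup (f := fun i => h (bb i) (q i) x) (Set.Finite.bddAbove (Set.finite_range _)) i₀
    · rw [hform x]
      exact ciSup_le fun i => hcomp_ub i x
  -- Step 2: compactness, extract a uniformly convergent subsequence
  have hClo : (0:ℝ) < C⁻¹ / 2 := by positivity
  have hCloChi : C⁻¹ / 2 < C + C⁻¹ := by
    have : (0:ℝ) < C⁻¹ := by positivity
    linarith
  have hKcpt := hii (C⁻¹/2) (C + C⁻¹) hClo hCloChi
  have hρsK : ∀ l, ρs l ∈ {f : C(X, ℝ) | f ∈ F ∧ ∀ x, C⁻¹/2 ≤ f x ∧ f x ≤ C + C⁻¹} := by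
    intro l
    refine ⟨hρsF l, fun x => ?_⟩
    have := hbound l x
    have hCinv : (0:ℝ) < C⁻¹ := by positivity
    exact ⟨by linarith [this.1], by linarith [this.2]⟩
  obtain ⟨ρ, hρK, s, hsmono, hρconv⟩ := hKcpt.tendsto_subseq hρsK
  have hρF : ρ ∈ F := hρK.1
  -- uniform convergence of the subsequence
  have huconv : TendstoUniformly (fun k x => (ρs ∘ s) k x) (fun x => ρ x) atTop :=
    ContinuousMap.tendsto_iff_tendstoUniformly.mp hρconv
  -- Step 3: measurable selections
  have hsel : ∀ φ ∈ F, ∃ g : X → Y, AEMeasurable g ω ∧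
      (∀ᵐ x ∂ω, T φ x = {g x}) ∧ (∀ x, g x ∈ T φ x) := by
    intro φ hφ
    obtain ⟨hne, hcont, hsv, -⟩ := hTCs φ hφ
    set g : X → Y := fun x => (hne x).choose with hg_def
    have hg : ∀ x, g x ∈ T φ x := fun x => (hne x).choose_spec
    have hae : ∀ᵐ x ∂ω, T φ x = {g x} := by
      filter_upwards [hsv] with x hx
      obtain ⟨y, hy⟩ := hx
      have : g x = y := by have := hg x; rw [hy] at this; exact this
      rw [hy, this]
    -- measurability from a.e. continuity
    set N := toMeasurable ω {x | ¬ ∃ y, T φ x = {y}} with hN_def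
    have hNnull : ω N = 0 := by
      rw [hN_def, measure_toMeasurable]
      exact hsv
    have hNc : ∀ x ∈ Nᶜ, ∃ y, T φ x = {y} := by
      intro x hx
      by_contra hcon
      exact hx (subset_toMeasurable ω _ hcon)
    have hcontOn : ContinuousOn g Nᶜ := by
      intro x hx
      refine ContinuousAt.continuousWithinAt ?_
      rw [ContinuousAt, tendsto_iff_seq_tendsto]
      intro u hu
      apply tendsto_of_subseq_tendsto
      intro ns hns
      obtain ⟨ms, y₀, hmsmono, hy₀mem, hy₀t⟩ :=
        hcont x (fun k => u (ns k)) (fun k => g (u (ns k))) (hu.comp hns)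
          (fun k => hg (u (ns k)))
      obtain ⟨y, hy⟩ := hNc x hx
      have hgx : g x = y := by have := hg x; rw [hy] at this; exact this
      have : y₀ = g x := by rw [hgx]; rw [hy] at hy₀mem; exact hy₀mem
      exact ⟨ms, this ▸ hy₀t⟩
    have hmeas : AEMeasurable g ω := by
      have h1 : AEMeasurable g (ω.restrict Nᶜ) :=
        hcontOn.aemeasurable (measurableSet_toMeasurable ω _).compl
      rwa [Measure.restrict_eq_self_of_ae_mem (by
        rw [MeasureTheory.ae_iff]; simpa using hNnull)] at h1
    exact ⟨g, hmeas, hae, hg⟩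
  -- pushforward identity for any solution data
  have hpush : ∀ φ ∈ F, ∀ g : X → Y, AEMeasurable g ω → (∀ᵐ x ∂ω, T φ x = {g x}) →
      ∀ E : Set Y, MeasurableSet E → ω.map g E = ω (SVPreimage (T φ) E) := by
    intro φ hφ g hmeas hae E hE
    rw [Measure.map_apply_of_aemeasurable hmeas hE]
    refine (measure_congr ?_).symm
    rw [Filter.eventuallyEq_set]
    filter_upwards [hae] with x hx
    simp only [SVPreimage, Set.mem_setOf_eq, hx, Set.singleton_inter_nonempty,
      Set.mem_preimage]
  -- selections for the subsequence and the limit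
  choose gl hglmeas hglae hglmem using fun k => hsel (ρs (s k)) (hρsF (s k))
  obtain ⟨g, hgmeas, hgae, hgmem⟩ := hsel ρ hρF
  -- measures as pushforwards
  have hmapl : ∀ k, ω.map (gl k) = μs (s k) := by
    intro k
    refine Measure.ext fun E hE => ?_
    rw [hpush (ρs (s k)) (hρsF (s k)) (gl k) (hglmeas k) (hglae k) E hE,
      hρssol (s k) E hE]
  -- Step 4: a.e. pointwise convergence of gl to g
  have hptwise : ∀ᵐ x ∂ω, Tendsto (fun k => gl k x) atTop (𝓝 (g x)) := by
    filter_upwards [hgae] with x hx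
    apply tendsto_of_subseq_tendsto
    intro ns hns
    have huc : TendstoUniformly (fun k z => ρs (s (ns k)) z) (fun z => ρ z) atTop :=
      ContinuousMap.tendsto_iff_tendstoUniformly.mp (hρconv.comp hns)
    obtain ⟨ms, y₀, hmsmono, hy₀mem, hy₀t⟩ :=
      hTcont ρ hρF (fun k => ρs (s (ns k))) (fun k => hρsF (s (ns k))) huc x
        (fun k => gl (ns k) x) (fun k => hglmem (ns k) x)
    have hy₀ : y₀ = g x := by rw [hx] at hy₀mem; exact hy₀mem
    exact ⟨ms, hy₀ ▸ hy₀t⟩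
  -- Step 5: for each continuous function, the integrals agree in the limit
  have hint : ∀ fc : C(Y, ℝ), ∫ y, fc y ∂(ω.map g) = ∫ y, fc y ∂μ := by
    intro fc
    -- the integrals over μs (s k) converge to both sides
    have hlhs : Tendsto (fun k => ∫ y, fc y ∂(μs (s k))) atTop
        (𝓝 (∫ y, fc y ∂μ)) := (hweak fc).comp hsmono.tendsto_atTop
    have heqk : ∀ k, ∫ y, fc y ∂(μs (s k)) = ∫ x, fc (gl k x) ∂ω := by
      intro k
      rw [← hmapl k, integral_map (hglmeas k) fc.continuous.aestronglyMeasurable]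
    have hdom : Tendsto (fun k => ∫ x, fc (gl k x) ∂ω) atTop
        (𝓝 (∫ x, fc (g x) ∂ω)) := by
      refine tendsto_integral_of_dominated_convergence (fun _ => ‖fc‖) ?_ ?_ ?_ ?_
      · exact fun k => (fc.continuous.measurable.comp_aemeasurable (hglmeas k)).aestronglyMeasurable
      · exact integrable_const _
      · intro k
        filter_upwards with x
        exact fc.norm_coe_le_norm (gl k x)
      · filter_upwards [hptwise] with x hx
        exact (fc.continuous.tendsto (g x)).comp hx
    have : Tendsto (fun k => ∫ y, fc y ∂(μs (s k))) atTop (𝓝 (∫ x, fc (g x) ∂ω)) := by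
      simpa only [heqk] using hdom
    have hlim := tendsto_nhds_unique this hlhs
    rw [integral_map hgmeas fc.continuous.aestronglyMeasurable]
    exact hlim
  -- Step 6: identify the measures
  haveI : IsFiniteMeasure (ω.map g) := by
    constructor
    rw [Measure.map_apply_of_aemeasurable hgmeas MeasurableSet.univ]
    exact measure_lt_top ω _
  have hμeq : ω.map g = μ := by
    apply MeasureTheory.ext_of_forall_lintegral_eq_of_IsFiniteMeasure
    intro f
    have hint' := hint ⟨fun y => (f y : ℝ), NNReal.continuous_coe.comp f.continuous⟩
    simp only [ContinuousMap.coe_mk] at hint'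
    rw [lintegral_coe_eq_integral f (f.integrable_of_nnreal _),
      lintegral_coe_eq_integral f (f.integrable_of_nnreal _), hint']
  refine ⟨ρ, hρF, fun E hE => ?_⟩
  rw [← hpush ρ hρF g hgmeas hgae E hE, hμeq]
end

section
/- Let n ≥ 2, 0 < κ < 1, P ∈ ℝⁿ with P ≠ 0, and κ|P| < b < |P|. For a unit vector x define ρ±(x) = ((b − κ² x·P) ± √(Δ(x·P)))/(1 − κ²), where Δ(t) = (b − κ²t)² − (1 − κ²)(b² − κ²|P|²). Then for every x ∈ S^{n−1}: Δ(x·P) ≥ κ²(x·P − b)² ≥ 0, ρ₋(x) ≤ b < ρ₊(x), and the point X = ρ₋(x)x lies on the Cartesian oval, i.e. |X| + κ|X − P| = b. -/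
open scoped RealInnerProductSpace

/-- The discriminant `Δ(t) = (b − κ²t)² − (1 − κ²)(b² − κ²|P|²)` of the quadratic equation
defining the polar radius of the Cartesian oval `|X| + κ|X − P| = b`. -/
noncomputable def ovalDelta (κ b normP t : ℝ) : ℝ :=
  (b - κ ^ 2 * t) ^ 2 - (1 - κ ^ 2) * (b ^ 2 - κ ^ 2 * normP ^ 2)

/-- The polar radius `h(x,P,b) = ρ₋(x)` of the refracting Cartesian oval (case `κ < 1`). -/
noncomputable def ovalH {n : ℕ} (κ b : ℝ) (P x : EuclideanSpace ℝ (Fin n)) : ℝ :=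
  ((b - κ ^ 2 * ⟪x, P⟫) - Real.sqrt (ovalDelta κ b ‖P‖ ⟪x, P⟫)) / (1 - κ ^ 2)

set_option maxHeartbeats 1000000

/-- Basic properties of the Cartesian oval for `κ < 1`: `Δ(x·P) ≥ κ²(x·P − b)² ≥ 0`,
`ρ₋(x) ≤ b < ρ₊(x)`, and `X = ρ₋(x)x` lies on the oval `|X| + κ|X − P| = b`. -/
theorem stmt9 {n : ℕ} (hn : 2 ≤ n) (κ : ℝ) (hκ0 : 0 < κ) (hκ1 : κ < 1)
    (P : EuclideanSpace ℝ (Fin n)) (hP : P ≠ 0) (b : ℝ)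
    (hb1 : κ * ‖P‖ < b) (hb2 : b < ‖P‖)
    (x : EuclideanSpace ℝ (Fin n)) (hx : ‖x‖ = 1) :
    (0 : ℝ) ≤ κ ^ 2 * (⟪x, P⟫ - b) ^ 2 ∧
    κ ^ 2 * (⟪x, P⟫ - b) ^ 2 ≤ ovalDelta κ b ‖P‖ ⟪x, P⟫ ∧
    ovalH κ b P x ≤ b ∧
    b < ((b - κ ^ 2 * ⟪x, P⟫) + Real.sqrt (ovalDelta κ b ‖P‖ ⟪x, P⟫)) / (1 - κ ^ 2) ∧
    ‖ovalH κ b P x • x‖ + κ * ‖ovalH κ b P x • x - P‖ = b := by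
  have hPpos : 0 < ‖P‖ := norm_pos_iff.mpr hP
  have hb0 : 0 < b := lt_trans (by positivity) hb1
  set t : ℝ := ⟪x, P⟫ with ht
  have htle : |t| ≤ ‖P‖ := by
    have h := abs_real_inner_le_norm x P
    rwa [hx, one_mul] at h
  have ht1 : -‖P‖ ≤ t := (abs_le.mp htle).1
  have ht2 : t ≤ ‖P‖ := (abs_le.mp htle).2
  have h1κ : 0 < 1 - κ ^ 2 := by nlinarith
  have hbP : κ ^ 2 * ‖P‖ ^ 2 < b ^ 2 := by
    nlinarith [mul_pos (show (0:ℝ) < b - κ * ‖P‖ by linarith)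
      (show (0:ℝ) < b + κ * ‖P‖ by positivity)]
  set Δ : ℝ := ovalDelta κ b ‖P‖ t with hΔdef
  have hΔeq : Δ = (b - κ ^ 2 * t) ^ 2 - (1 - κ ^ 2) * (b ^ 2 - κ ^ 2 * ‖P‖ ^ 2) := hΔdef
  have hA : 0 < b - κ ^ 2 * t := by nlinarith
  have hΔge : κ ^ 2 * (t - b) ^ 2 ≤ Δ := by nlinarith [sq_nonneg κ, mul_nonneg (mul_nonneg h1κ.le (sq_nonneg κ)) (by nlinarith [sq_abs t] : (0:ℝ) ≤ ‖P‖ ^ 2 - t ^ 2)]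
  have hΔ0 : (0:ℝ) ≤ Δ := le_trans (by positivity) hΔge
  have hΔlt : Δ < (b - κ ^ 2 * t) ^ 2 := by nlinarith
  have hΔgt : κ ^ 4 * (t - b) ^ 2 < Δ := by
    have hq : (0:ℝ) < ‖P‖ ^ 2 - 2 * t * b + b ^ 2 := by nlinarith [pow_pos (show (0:ℝ) < ‖P‖ - b by linarith) 2]
    nlinarith [mul_pos (mul_pos h1κ (pow_pos hκ0 2)) hq]
  set s : ℝ := Real.sqrt Δ with hsdef
  have hs0 : 0 ≤ s := Real.sqrt_nonneg Δ
  have hs2 : s ^ 2 = Δ := Real.sq_sqrt hΔ0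
  have hslt : κ ^ 2 * |t - b| < s := by
    have h := Real.sqrt_lt_sqrt (by positivity) hΔgt
    rwa [show κ ^ 4 * (t - b) ^ 2 = (κ ^ 2 * |t - b|) ^ 2 by rw [mul_pow, sq_abs]; ring,
      Real.sqrt_sq (by positivity)] at h
  have hsA : s < b - κ ^ 2 * t := by
    have h := Real.sqrt_lt_sqrt hΔ0 hΔlt
    rwa [Real.sqrt_sq hA.le] at h
  set ρ : ℝ := ovalH κ b P x with hρdef
  have hρ : ρ = ((b - κ ^ 2 * t) - s) / (1 - κ ^ 2) := by
    rw [hρdef]; unfold ovalH; rw [← ht, ← hΔdef, ← hsdef]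
  have hρpos : 0 < ρ := by
    rw [hρ]; exact div_pos (by linarith) h1κ
  have hρle : ρ ≤ b := by
    rw [hρ, div_le_iff₀ h1κ]
    have h' : κ ^ 2 * (b - t) ≤ κ ^ 2 * |t - b| := by
      rw [abs_sub_comm]
      exact mul_le_mul_of_nonneg_left (le_abs_self _) (sq_nonneg κ)
    linarith
  have hρlt : b < ((b - κ ^ 2 * t) + s) / (1 - κ ^ 2) := by
    rw [lt_div_iff₀ h1κ]
    have h' : κ ^ 2 * (t - b) ≤ κ ^ 2 * |t - b| :=
      mul_le_mul_of_nonneg_left (le_abs_self _) (sq_nonneg κ)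
    linarith
  refine ⟨by positivity, hΔge, hρle, hρlt, ?_⟩
  have h1 : ρ * (1 - κ ^ 2) = (b - κ ^ 2 * t) - s := by
    rw [hρ]; field_simp
  have hquad : (1 - κ ^ 2) * ρ ^ 2 - 2 * (b - κ ^ 2 * t) * ρ + (b ^ 2 - κ ^ 2 * ‖P‖ ^ 2) = 0 := by
    have hk' : (1 - κ ^ 2) *
        ((1 - κ ^ 2) * ρ ^ 2 - 2 * (b - κ ^ 2 * t) * ρ + (b ^ 2 - κ ^ 2 * ‖P‖ ^ 2)) = 0 := by
      linear_combination (ρ * (1 - κ ^ 2) - (b - κ ^ 2 * t) - s) * h1 + hs2 + hΔeq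
    exact (mul_eq_zero.mp hk').resolve_left h1κ.ne'
  have hXnorm : ‖ρ • x‖ = ρ := by
    rw [norm_smul, hx, mul_one, Real.norm_eq_abs, abs_of_pos hρpos]
  have hsub : ‖ρ • x - P‖ ^ 2 = ρ ^ 2 - 2 * ρ * t + ‖P‖ ^ 2 := by
    rw [@norm_sub_sq_real, real_inner_smul_left, ← ht, norm_smul, hx, mul_one,
      Real.norm_eq_abs, sq_abs]
    ring
  have hk : κ * ‖ρ • x - P‖ = b - ρ := by
    have h2 : (κ * ‖ρ • x - P‖) ^ 2 = (b - ρ) ^ 2 := by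
      rw [mul_pow, hsub]; linear_combination -hquad
    have h3 : (0:ℝ) ≤ κ * ‖ρ • x - P‖ := by positivity
    calc κ * ‖ρ • x - P‖ = Real.sqrt ((κ * ‖ρ • x - P‖) ^ 2) := (Real.sqrt_sq h3).symm
      _ = Real.sqrt ((b - ρ) ^ 2) := by rw [h2]
      _ = b - ρ := Real.sqrt_sq (by linarith)
  rw [hXnorm, hk]; ring
end

section
/- Let n ≥ 2, 0 < κ < 1, P ∈ ℝⁿ with P ≠ 0, and κ|P| < b < |P|. Then min over x ∈ S^{n−1} of h(x,P,b) equals (b − κ|P|)/(1 + κ), and max over x ∈ S^{n−1} of h(x,P,b) equals (b − κ|P|)/(1 − κ). -/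
open scoped RealInnerProductSpace

lemma aux_bounds (κ b p t : ℝ) (hκ0 : 0 < κ) (hκ1 : κ < 1)
    (hb1 : κ * p < b) (hb2 : b < p) (ht : |t| ≤ p) :
    (b - κ * p) / (1 + κ) ≤ ((b - κ ^ 2 * t) - Real.sqrt (ovalDelta κ b p t)) / (1 - κ ^ 2)
    ∧ ((b - κ ^ 2 * t) - Real.sqrt (ovalDelta κ b p t)) / (1 - κ ^ 2) ≤ (b - κ * p) / (1 - κ) := by
  have ht1 : -p ≤ t := neg_le_of_abs_le ht
  have ht2 : t ≤ p := le_of_abs_le ht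
  have hp : 0 < p := lt_trans (by nlinarith) hb2
  have hκ2 : (0:ℝ) < 1 - κ ^ 2 := by nlinarith
  set Δ := ovalDelta κ b p t with hΔ
  have hΔ0 : 0 ≤ Δ := by
    have he : Δ = κ^2*(t-b)^2 + κ^2*(1-κ^2)*(p^2-t^2) := by
      simp only [hΔ, ovalDelta]; ring
    have h1 : 0 ≤ p^2 - t^2 := by nlinarith
    have h2 : 0 ≤ κ^2*(t-b)^2 := by positivity
    have h3 : 0 ≤ κ^2*(1-κ^2)*(p^2-t^2) := by
      apply mul_nonneg (by positivity) h1
    linarith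
  -- upper bound for sqrt
  have hS_le : Real.sqrt Δ ≤ (b - κ ^ 2 * t) - (1 - κ) * (b - κ * p) := by
    have hA : 0 ≤ (b - κ ^ 2 * t) - (1 - κ) * (b - κ * p) := by nlinarith
    have hΔle : Δ ≤ ((b - κ ^ 2 * t) - (1 - κ) * (b - κ * p)) ^ 2 := by
      have he : ((b - κ ^ 2 * t) - (1 - κ) * (b - κ * p)) ^ 2 - Δ
          = 2*κ^2*(1-κ)*(b-κ*p)*(t+p) := by
        simp only [hΔ, ovalDelta]; ring
      have h4 : 0 ≤ 2*κ^2*(1-κ)*(b-κ*p)*(t+p) := by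
        apply mul_nonneg (mul_nonneg (mul_nonneg (by positivity) (by linarith)) (by linarith)) (by linarith)
      linarith
    calc Real.sqrt Δ ≤ Real.sqrt (((b - κ ^ 2 * t) - (1 - κ) * (b - κ * p)) ^ 2) :=
          Real.sqrt_le_sqrt hΔle
      _ = _ := by rw [Real.sqrt_sq hA]
  -- lower bound for sqrt
  have hS_ge : (b - κ ^ 2 * t) - (1 + κ) * (b - κ * p) ≤ Real.sqrt Δ := by
    rcases le_or_gt ((b - κ ^ 2 * t) - (1 + κ) * (b - κ * p)) 0 with h | h
    · exact h.trans (Real.sqrt_nonneg _)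
    · rw [show (b - κ ^ 2 * t) - (1 + κ) * (b - κ * p)
          = Real.sqrt (((b - κ ^ 2 * t) - (1 + κ) * (b - κ * p))^2) from
          (Real.sqrt_sq h.le).symm]
      apply Real.sqrt_le_sqrt
      have he : Δ - ((b - κ ^ 2 * t) - (1 + κ) * (b - κ * p)) ^ 2
          = 2*κ^2*(1+κ)*(b-κ*p)*(p-t) := by
        simp only [hΔ, ovalDelta]; ring
      have h4 : 0 ≤ 2*κ^2*(1+κ)*(b-κ*p)*(p-t) := by
        apply mul_nonneg (mul_nonneg (mul_nonneg (by positivity) (by linarith)) (by linarith)) (by linarith)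
      linarith
  constructor
  · rw [div_le_div_iff₀ (by nlinarith) hκ2]
    nlinarith
  · rw [div_le_div_iff₀ hκ2 (by nlinarith)]
    nlinarith

/-- Lemma 4.1, first part: the minimum and maximum of `h(·,P,b)` over the unit sphere. -/
theorem stmt10 {n : ℕ} (hn : 2 ≤ n) (κ : ℝ) (hκ0 : 0 < κ) (hκ1 : κ < 1)
    (P : EuclideanSpace ℝ (Fin n)) (hP : P ≠ 0) (b : ℝ)
    (hb1 : κ * ‖P‖ < b) (hb2 : b < ‖P‖) :
    IsLeast {r : ℝ | ∃ x : EuclideanSpace ℝ (Fin n), ‖x‖ = 1 ∧ ovalH κ b P x = r}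
      ((b - κ * ‖P‖) / (1 + κ)) ∧
    IsGreatest {r : ℝ | ∃ x : EuclideanSpace ℝ (Fin n), ‖x‖ = 1 ∧ ovalH κ b P x = r}
      ((b - κ * ‖P‖) / (1 - κ)) := by
  set p := ‖P‖ with hp
  have hp0 : 0 < p := norm_pos_iff.mpr hP
  have hκ2 : (0:ℝ) < 1 - κ ^ 2 := by nlinarith
  have hbound : ∀ x : EuclideanSpace ℝ (Fin n), ‖x‖ = 1 →
      (b - κ * p) / (1 + κ) ≤ ovalH κ b P x ∧ ovalH κ b P x ≤ (b - κ * p) / (1 - κ) := by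
    intro x hx
    have ht : |⟪x, P⟫| ≤ p := by
      calc |⟪x, P⟫| ≤ ‖x‖ * ‖P‖ := abs_real_inner_le_norm x P
        _ = p := by rw [hx, one_mul]
    exact aux_bounds κ b p ⟪x, P⟫ hκ0 hκ1 hb1 hb2 ht
  -- witnesses
  have hxplus : ⟪(‖P‖⁻¹ : ℝ) • P, P⟫ = p := by
    rw [real_inner_smul_left, real_inner_self_eq_norm_sq]
    field_simp
    rw [hp]
  have hxminus : ⟪(-‖P‖⁻¹ : ℝ) • P, P⟫ = -p := by
    rw [real_inner_smul_left, real_inner_self_eq_norm_sq]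
    field_simp
    rw [hp]
  have hnplus : ‖(‖P‖⁻¹ : ℝ) • P‖ = 1 := by
    rw [norm_smul]; simp [abs_of_pos (inv_pos.mpr hp0)]
    field_simp
  have hnminus : ‖(-‖P‖⁻¹ : ℝ) • P‖ = 1 := by
    rw [norm_smul]; simp [abs_of_pos (inv_pos.mpr hp0)]
    field_simp
  have hvplus : ovalH κ b P ((‖P‖⁻¹ : ℝ) • P) = (b - κ * p) / (1 - κ) := by
    rw [ovalH, hxplus]
    have hΔ : ovalDelta κ b p p = (κ * (p - b)) ^ 2 := by rw [ovalDelta]; ring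
    rw [hΔ, Real.sqrt_sq (by nlinarith)]
    rw [div_eq_div_iff hκ2.ne' (by nlinarith)]
    ring
  have hvminus : ovalH κ b P ((-‖P‖⁻¹ : ℝ) • P) = (b - κ * p) / (1 + κ) := by
    rw [ovalH, hxminus]
    have hΔ : ovalDelta κ b p (-p) = (κ * (p + b)) ^ 2 := by rw [ovalDelta]; ring
    rw [hΔ, Real.sqrt_sq (by nlinarith)]
    rw [div_eq_div_iff hκ2.ne' (by nlinarith)]
    ring
  refine ⟨⟨⟨_, hnminus, hvminus⟩, ?_⟩, ⟨⟨_, hnplus, hvplus⟩, ?_⟩⟩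
  · rintro r ⟨x, hx, rfl⟩; exact (hbound x hx).1
  · rintro r ⟨x, hx, rfl⟩; exact (hbound x hx).2
end

section
/- Let n ≥ 2, 0 < κ < 1, P ∈ ℝⁿ with P ≠ 0, and κ|P| < b < |P|. Then: (i) min over x ∈ S^{n−1} of |P − h(x,P,b)x| equals (|P| − b)/(1 − κ); this minimum is attained at x = P/|P| and coincides with the minimum over {x ∈ S^{n−1} : x·P ≥ b}; (ii) max over {x ∈ S^{n−1} : x·P ≥ b} of |P − h(x,P,b)x| equals √(|P|² − b²)/√(1 − κ²). -/
open scoped RealInnerProductSpace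

private lemma oval_key {n : ℕ} (κ b : ℝ) (hκ0 : 0 < κ) (hκ1 : κ < 1)
    (P x : EuclideanSpace ℝ (Fin n)) (hx : ‖x‖ = 1) :
    ‖P - ovalH κ b P x • x‖
      = (κ ^ 2 * (⟪x, P⟫ - b) + Real.sqrt (ovalDelta κ b ‖P‖ ⟪x, P⟫)) / (κ * (1 - κ ^ 2)) := by
  set t : ℝ := ⟪x, P⟫ with htdef
  set p : ℝ := ‖P‖ with hpdef
  have ht : |t| ≤ p := by
    have := abs_real_inner_le_norm x P
    rwa [hx, one_mul] at this
  have ht2 : t ^ 2 ≤ p ^ 2 := by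
    have h1 := le_abs_self t
    have h2 := neg_abs_le t
    nlinarith
  have hΔeq : ovalDelta κ b p t
      = κ ^ 2 * (t - b) ^ 2 + κ ^ 2 * (1 - κ ^ 2) * (p ^ 2 - t ^ 2) := by
    unfold ovalDelta; ring
  have hκ2 : (0:ℝ) < 1 - κ ^ 2 := by nlinarith
  have hΔ0 : 0 ≤ ovalDelta κ b p t := by
    rw [hΔeq]
    nlinarith [mul_nonneg (sq_nonneg κ) (sq_nonneg (t - b)),
      mul_nonneg (mul_nonneg (sq_nonneg κ) hκ2.le) (sub_nonneg.2 ht2)]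
  set d : ℝ := Real.sqrt (ovalDelta κ b p t) with hddef
  have hd0 : 0 ≤ d := Real.sqrt_nonneg _
  have hd2 : d ^ 2 = (b - κ ^ 2 * t) ^ 2 - (1 - κ ^ 2) * (b ^ 2 - κ ^ 2 * p ^ 2) := by
    rw [hddef, Real.sq_sqrt hΔ0]; unfold ovalDelta; ring
  have hdge : κ ^ 2 * (b - t) ≤ d := by
    have hsq : (κ ^ 2 * (b - t)) ^ 2 ≤ ovalDelta κ b p t := by
      rw [hΔeq]
      nlinarith [mul_nonneg (mul_nonneg (sq_nonneg κ) hκ2.le) (sq_nonneg (t - b)),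
        mul_nonneg (mul_nonneg (sq_nonneg κ) hκ2.le) (sub_nonneg.2 ht2)]
    calc κ ^ 2 * (b - t) ≤ |κ ^ 2 * (b - t)| := le_abs_self _
      _ = Real.sqrt ((κ ^ 2 * (b - t)) ^ 2) := (Real.sqrt_sq_eq_abs _).symm
      _ ≤ d := Real.sqrt_le_sqrt hsq
  have hnum : 0 ≤ κ ^ 2 * (t - b) + d := by linarith
  have hden : (0:ℝ) < κ * (1 - κ ^ 2) := by positivity
  set H : ℝ := ovalH κ b P x with hHdef
  have hHd : (1 - κ ^ 2) * H = (b - κ ^ 2 * t) - d := by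
    rw [hHdef]; unfold ovalH
    rw [← htdef, ← hpdef, ← hddef]
    field_simp
  have e1 : ((1 - κ ^ 2) * H - (b - κ ^ 2 * t)) ^ 2 = d ^ 2 := by rw [hHd]; ring
  have quad : (1 - κ ^ 2) * ((1 - κ ^ 2) * H ^ 2 - 2 * (b - κ ^ 2 * t) * H
      + (b ^ 2 - κ ^ 2 * p ^ 2)) = 0 := by
    linear_combination e1 + hd2
  have e2 : κ ^ 2 * (t - b) + d = (1 - κ ^ 2) * (b - H) := by linear_combination hHd
  have expand : ‖P - H • x‖ ^ 2 = p ^ 2 - 2 * (H * t) + H ^ 2 := by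
    rw [norm_sub_sq_real, real_inner_smul_right, real_inner_comm, ← htdef, norm_smul,
      hx, mul_one, Real.norm_eq_abs, sq_abs, ← hpdef]
  have key2 : (κ * (1 - κ ^ 2)) ^ 2 * (p ^ 2 - 2 * (H * t) + H ^ 2)
      = (κ ^ 2 * (t - b) + d) ^ 2 := by
    rw [e2]
    linear_combination (-(1 - κ ^ 2)) * quad
  have hsq : ‖P - H • x‖ ^ 2 = ((κ ^ 2 * (t - b) + d) / (κ * (1 - κ ^ 2))) ^ 2 := by
    rw [expand, div_pow, eq_div_iff (by positivity)]
    linear_combination key2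
  calc ‖P - H • x‖ = Real.sqrt (‖P - H • x‖ ^ 2) := (Real.sqrt_sq (norm_nonneg _)).symm
    _ = Real.sqrt (((κ ^ 2 * (t - b) + d) / (κ * (1 - κ ^ 2))) ^ 2) := by rw [hsq]
    _ = (κ ^ 2 * (t - b) + d) / (κ * (1 - κ ^ 2)) := Real.sqrt_sq (by positivity)

private lemma oval_min_bound (κ b p t : ℝ) (hκ0 : 0 < κ) (hκ1 : κ < 1)
    (hb1 : κ * p < b) (hb2 : b < p) (hp0 : 0 < p) (ht2 : t ^ 2 ≤ p ^ 2) :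
    (p - b) / (1 - κ) ≤ (κ ^ 2 * (t - b) + Real.sqrt (ovalDelta κ b p t)) / (κ * (1 - κ ^ 2)) := by
  have hκ2 : (0:ℝ) < 1 - κ ^ 2 := by nlinarith
  have htp : t ≤ p := by nlinarith
  have hΔeq : ovalDelta κ b p t
      = κ ^ 2 * (t - b) ^ 2 + κ ^ 2 * (1 - κ ^ 2) * (p ^ 2 - t ^ 2) := by
    unfold ovalDelta; ring
  set d : ℝ := Real.sqrt (ovalDelta κ b p t) with hddef
  have hclaim : κ * ((p - b) + κ * (p - t)) ≤ d := by
    have hsq : (κ * ((p - b) + κ * (p - t))) ^ 2 ≤ ovalDelta κ b p t := by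
      rw [hΔeq]
      nlinarith [mul_nonneg (mul_nonneg (mul_nonneg (sq_nonneg κ) hκ0.le)
          (sub_nonneg.2 htp)) (sub_nonneg.2 hb1.le),
        mul_nonneg (mul_nonneg (sq_nonneg κ) (sub_nonneg.2 htp)) (sub_nonneg.2 hb1.le)]
    have h0 : 0 ≤ κ * ((p - b) + κ * (p - t)) := by
      have h1 : 0 ≤ p - b := by linarith
      have h2 : 0 ≤ p - t := by linarith
      positivity
    calc κ * ((p - b) + κ * (p - t))
        = Real.sqrt ((κ * ((p - b) + κ * (p - t))) ^ 2) := (Real.sqrt_sq h0).symm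
      _ ≤ d := Real.sqrt_le_sqrt hsq
  have hden : (0:ℝ) < κ * (1 - κ ^ 2) := by positivity
  rw [div_le_div_iff₀ (by linarith) hden]
  nlinarith [mul_nonneg (sub_nonneg.2 hκ1.le) (sub_nonneg.2 hclaim)]

private lemma oval_max_bound (κ b p t : ℝ) (hκ0 : 0 < κ) (hκ1 : κ < 1)
    (hb1 : κ * p < b) (hb2 : b < p) (hp0 : 0 < p) (htb : b ≤ t) (htp : t ≤ p) :
    (κ ^ 2 * (t - b) + Real.sqrt (ovalDelta κ b p t)) / (κ * (1 - κ ^ 2))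
      ≤ Real.sqrt (p ^ 2 - b ^ 2) / Real.sqrt (1 - κ ^ 2) := by
  have hκ2 : (0:ℝ) < 1 - κ ^ 2 := by nlinarith
  have hb0 : 0 < b := lt_trans (by positivity) hb1
  set s : ℝ := Real.sqrt (p ^ 2 - b ^ 2) with hsdef
  set q : ℝ := Real.sqrt (1 - κ ^ 2) with hqdef
  have hs0 : 0 ≤ s := Real.sqrt_nonneg _
  have hq0 : 0 < q := Real.sqrt_pos.2 hκ2
  have hs2 : s ^ 2 = p ^ 2 - b ^ 2 := Real.sq_sqrt (by nlinarith)
  have hq2 : q ^ 2 = 1 - κ ^ 2 := Real.sq_sqrt hκ2.le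
  have hbq : κ * s ≤ b * q := by
    have h1 : (κ * s) ^ 2 ≤ (b * q) ^ 2 := by
      rw [mul_pow, mul_pow, hs2, hq2]
      nlinarith [mul_pos (sub_pos.2 hb1) (show (0:ℝ) < b + κ * p by
        have := mul_pos hκ0 hp0; linarith)]
    calc κ * s = Real.sqrt ((κ * s) ^ 2) := (Real.sqrt_sq (by positivity)).symm
      _ ≤ Real.sqrt ((b * q) ^ 2) := Real.sqrt_le_sqrt h1
      _ = b * q := Real.sqrt_sq (by positivity)
  have hqs : κ * (t - b) ≤ q * s := by
    have h1 : (κ * (t - b)) ^ 2 ≤ (q * s) ^ 2 := by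
      rw [mul_pow, mul_pow, hs2, hq2]
      have hpb : (0:ℝ) ≤ p + b - 2 * κ ^ 2 * p := by nlinarith [mul_pos hκ0 hp0]
      nlinarith [mul_nonneg (sub_nonneg.2 hb2.le) hpb,
        mul_nonneg (mul_nonneg (sq_nonneg κ) (sub_nonneg.2 htp))
          (show (0:ℝ) ≤ p + t - 2 * b by linarith)]
    calc κ * (t - b) = Real.sqrt ((κ * (t - b)) ^ 2) :=
        (Real.sqrt_sq (mul_nonneg hκ0.le (by linarith))).symm
      _ ≤ Real.sqrt ((q * s) ^ 2) := Real.sqrt_le_sqrt h1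
      _ = q * s := Real.sqrt_sq (by positivity)
  have hΔeq : ovalDelta κ b p t
      = κ ^ 2 * (t - b) ^ 2 + κ ^ 2 * (1 - κ ^ 2) * (p ^ 2 - t ^ 2) := by
    unfold ovalDelta; ring
  set d : ℝ := Real.sqrt (ovalDelta κ b p t) with hddef
  have hrhs0 : 0 ≤ κ * (q * s - κ * (t - b)) :=
    mul_nonneg hκ0.le (by linarith)
  have hbq2 : κ * (q * s) ≤ b * (1 - κ ^ 2) := by
    calc κ * (q * s) = q * (κ * s) := by ring
      _ ≤ q * (b * q) := mul_le_mul_of_nonneg_left hbq hq0.le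
      _ = b * (1 - κ ^ 2) := by rw [← hq2]; ring
  have hclaim : d ≤ κ * (q * s - κ * (t - b)) := by
    have hexp : (κ * (q * s - κ * (t - b))) ^ 2
        = κ ^ 2 * ((1 - κ ^ 2) * (p ^ 2 - b ^ 2)) - 2 * κ ^ 3 * (q * s) * (t - b)
          + κ ^ 4 * (t - b) ^ 2 := by
      linear_combination (κ ^ 2 * q ^ 2) * hs2 + (κ ^ 2 * (p ^ 2 - b ^ 2)) * hq2
    have hsq : ovalDelta κ b p t ≤ (κ * (q * s - κ * (t - b))) ^ 2 := by
      rw [hΔeq, hexp]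
      nlinarith [mul_nonneg (mul_nonneg (sq_nonneg κ) (sub_nonneg.2 htb))
        (sub_nonneg.2 hbq2)]
    calc d ≤ Real.sqrt ((κ * (q * s - κ * (t - b))) ^ 2) := Real.sqrt_le_sqrt hsq
      _ = κ * (q * s - κ * (t - b)) := Real.sqrt_sq hrhs0
  have hden : (0:ℝ) < κ * (1 - κ ^ 2) := by positivity
  rw [div_le_div_iff₀ hden hq0]
  calc (κ ^ 2 * (t - b) + d) * q
      ≤ (κ ^ 2 * (t - b) + κ * (q * s - κ * (t - b))) * q :=
        mul_le_mul_of_nonneg_right (by linarith) hq0.le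
    _ = s * (κ * (1 - κ ^ 2)) := by linear_combination (κ * s) * hq2

/-- Lemma 4.1, second part: extrema of the distance `|P − h(x,P,b)x|` from the focus `P`
to the oval. -/
theorem stmt11 {n : ℕ} (hn : 2 ≤ n) (κ : ℝ) (hκ0 : 0 < κ) (hκ1 : κ < 1)
    (P : EuclideanSpace ℝ (Fin n)) (hP : P ≠ 0) (b : ℝ)
    (hb1 : κ * ‖P‖ < b) (hb2 : b < ‖P‖) :
    -- (i) the minimum over the whole sphere ...
    IsLeast {r : ℝ | ∃ x : EuclideanSpace ℝ (Fin n), ‖x‖ = 1 ∧ ‖P - ovalH κ b P x • x‖ = r}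
      ((‖P‖ - b) / (1 - κ)) ∧
    -- ... is attained at x = P/|P| ...
    ‖P - ovalH κ b P (‖P‖⁻¹ • P) • (‖P‖⁻¹ • P)‖ = (‖P‖ - b) / (1 - κ) ∧
    -- ... and coincides with the minimum over {x : x·P ≥ b}
    IsLeast {r : ℝ | ∃ x : EuclideanSpace ℝ (Fin n), ‖x‖ = 1 ∧ b ≤ ⟪x, P⟫ ∧
        ‖P - ovalH κ b P x • x‖ = r}
      ((‖P‖ - b) / (1 - κ)) ∧
    -- (ii) the maximum over {x : x·P ≥ b}
    IsGreatest {r : ℝ | ∃ x : EuclideanSpace ℝ (Fin n), ‖x‖ = 1 ∧ b ≤ ⟪x, P⟫ ∧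
        ‖P - ovalH κ b P x • x‖ = r}
      (Real.sqrt (‖P‖ ^ 2 - b ^ 2) / Real.sqrt (1 - κ ^ 2)) := by
  have hp0 : (0:ℝ) < ‖P‖ := norm_pos_iff.2 hP
  have hκ2 : (0:ℝ) < 1 - κ ^ 2 := by nlinarith
  have hden : (0:ℝ) < κ * (1 - κ ^ 2) := by positivity
  -- the point x₀ = P/‖P‖
  set x₀ : EuclideanSpace ℝ (Fin n) := ‖P‖⁻¹ • P with hx₀def
  have hx₀ : ‖x₀‖ = 1 := by
    rw [hx₀def, norm_smul, norm_inv, norm_norm, inv_mul_cancel₀ hp0.ne']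
  have ht₀ : ⟪x₀, P⟫ = ‖P‖ := by
    rw [hx₀def, real_inner_smul_left, real_inner_self_eq_norm_sq, sq]
    field_simp
  have val₀ : ‖P - ovalH κ b P x₀ • x₀‖ = (‖P‖ - b) / (1 - κ) := by
    rw [oval_key κ b hκ0 hκ1 P x₀ hx₀, ht₀]
    have hΔ : ovalDelta κ b ‖P‖ ‖P‖ = (κ * (‖P‖ - b)) ^ 2 := by unfold ovalDelta; ring
    rw [hΔ, Real.sqrt_sq (mul_nonneg hκ0.le (by linarith))]
    rw [div_eq_div_iff hden.ne' (by linarith : (0:ℝ) < 1 - κ).ne']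
    ring
  -- lower bound over the sphere
  have hlb : ∀ x : EuclideanSpace ℝ (Fin n), ‖x‖ = 1 →
      (‖P‖ - b) / (1 - κ) ≤ ‖P - ovalH κ b P x • x‖ := by
    intro x hx
    rw [oval_key κ b hκ0 hκ1 P x hx]
    have ht : |⟪x, P⟫| ≤ ‖P‖ := by
      have := abs_real_inner_le_norm x P; rwa [hx, one_mul] at this
    have ht2 : ⟪x, P⟫ ^ 2 ≤ ‖P‖ ^ 2 := by
      nlinarith [le_abs_self ⟪x, P⟫, neg_abs_le ⟪x, P⟫]
    exact oval_min_bound κ b ‖P‖ ⟪x, P⟫ hκ0 hκ1 hb1 hb2 hp0 ht2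
  -- orthogonal unit vector
  have horth : (Submodule.span ℝ {P})ᗮ ≠ ⊥ := by
    intro h
    have h1 := Submodule.finrank_add_finrank_orthogonal (𝕜 := ℝ) (Submodule.span ℝ {P})
    rw [h, finrank_span_singleton hP, finrank_euclideanSpace_fin] at h1
    simp at h1
    omega
  obtain ⟨v, hvmem, hvne⟩ := Submodule.exists_mem_ne_zero_of_ne_bot horth
  have hvP : ⟪v, P⟫ = 0 := by
    have := (Submodule.mem_orthogonal _ v).1 hvmem P (Submodule.mem_span_singleton_self P)
    rw [real_inner_comm]; exact this
  have hv0 : (0:ℝ) < ‖v‖ := norm_pos_iff.2 hvne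
  set e : EuclideanSpace ℝ (Fin n) := ‖v‖⁻¹ • v with hedef
  have he : ‖e‖ = 1 := by
    rw [hedef, norm_smul, norm_inv, norm_norm, inv_mul_cancel₀ hv0.ne']
  have heP : ⟪e, P⟫ = 0 := by
    rw [hedef, real_inner_smul_left, hvP, mul_zero]
  -- the point x₁ with ⟪x₁, P⟫ = b
  set s : ℝ := Real.sqrt (‖P‖ ^ 2 - b ^ 2) with hsdef
  set q : ℝ := Real.sqrt (1 - κ ^ 2) with hqdef
  have hs0 : 0 ≤ s := Real.sqrt_nonneg _
  have hq0 : 0 < q := Real.sqrt_pos.2 hκ2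
  have hb0 : 0 < b := lt_trans (mul_pos hκ0 hp0) hb1
  have hs2 : s ^ 2 = ‖P‖ ^ 2 - b ^ 2 := Real.sq_sqrt (by nlinarith)
  have hq2 : q ^ 2 = 1 - κ ^ 2 := Real.sq_sqrt hκ2.le
  set x₁ : EuclideanSpace ℝ (Fin n) := (b / ‖P‖ ^ 2) • P + (s / ‖P‖) • e with hx₁def
  have ht₁ : ⟪x₁, P⟫ = b := by
    rw [hx₁def, inner_add_left, real_inner_smul_left, real_inner_smul_left, heP,
      real_inner_self_eq_norm_sq, mul_zero, add_zero, div_mul_cancel₀]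
    positivity
  have hx₁ : ‖x₁‖ = 1 := by
    have hsq : ‖x₁‖ ^ 2 = 1 := by
      have hPe : ⟪P, e⟫ = 0 := by rw [real_inner_comm]; exact heP
      rw [hx₁def, norm_add_sq_real, real_inner_smul_left, real_inner_smul_right, hPe,
        norm_smul, norm_smul, mul_pow, mul_pow, he]
      rw [Real.norm_eq_abs, Real.norm_eq_abs, sq_abs, sq_abs]
      rw [div_pow, div_pow, hs2]
      field_simp
      ring
    calc ‖x₁‖ = Real.sqrt (‖x₁‖ ^ 2) := (Real.sqrt_sq (norm_nonneg _)).symm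
      _ = 1 := by rw [hsq, Real.sqrt_one]
  have val₁ : ‖P - ovalH κ b P x₁ • x₁‖ = s / q := by
    rw [oval_key κ b hκ0 hκ1 P x₁ hx₁, ht₁]
    have hΔ : ovalDelta κ b ‖P‖ b = (κ * q * s) ^ 2 := by
      unfold ovalDelta
      linear_combination (-(κ ^ 2 * s ^ 2)) * hq2 - κ ^ 2 * (1 - κ ^ 2) * hs2
    rw [hΔ, Real.sqrt_sq (by positivity)]
    rw [div_eq_div_iff hden.ne' hq0.ne']
    linear_combination (κ * s) * hq2
  -- upper bound on the cap
  have hub : ∀ x : EuclideanSpace ℝ (Fin n), ‖x‖ = 1 → b ≤ ⟪x, P⟫ →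
      ‖P - ovalH κ b P x • x‖ ≤ s / q := by
    intro x hx hbx
    rw [oval_key κ b hκ0 hκ1 P x hx]
    have ht : |⟪x, P⟫| ≤ ‖P‖ := by
      have := abs_real_inner_le_norm x P; rwa [hx, one_mul] at this
    have htp : ⟪x, P⟫ ≤ ‖P‖ := le_trans (le_abs_self _) ht
    exact oval_max_bound κ b ‖P‖ ⟪x, P⟫ hκ0 hκ1 hb1 hb2 hp0 hbx htp
  refine ⟨⟨⟨x₀, hx₀, val₀⟩, ?_⟩, val₀, ⟨⟨x₀, hx₀, by rw [ht₀]; linarith, val₀⟩, ?_⟩,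
    ⟨x₁, hx₁, le_of_eq ht₁.symm, val₁⟩, ?_⟩
  · rintro r ⟨x, hx, rfl⟩
    exact hlb x hx
  · rintro r ⟨x, hx, _, rfl⟩
    exact hlb x hx
  · rintro r ⟨x, hx, hbx, rfl⟩
    exact hub x hx hbx
end

section
/- Under assumptions (H1) and (H2) with 0 < κ < 1, there exists a constant L, depending only on κ, τ, r₀ and sup_{P∈D}|P|, such that every near field refractor ρ : Ω̄ → (0, r₀] is Lipschitz continuous on Ω̄ with Lipschitz constant L: |ρ(x) − ρ(y)| ≤ L|x − y| for all x, y ∈ Ω̄. -/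
set_option maxHeartbeats 1000000


open MeasureTheory
open scoped RealInnerProductSpace

/-- Lemma A -/
lemma deltaA (κ b p t : ℝ) (hκ0 : 0 ≤ κ) (hκ1 : κ ≤ 1) (hp : 0 ≤ p)
    (hb : κ * p ≤ b) (ht : t ≤ p) : κ ^ 2 * (p - b) ^ 2 ≤ ovalDelta κ b p t := by
  have key : ovalDelta κ b p t - κ ^ 2 * (p - b) ^ 2
      = κ ^ 2 * (p - t) * (2 * b - κ ^ 2 * (t + p)) := by
    unfold ovalDelta; ring
  have h2 : 0 ≤ 2 * b - κ ^ 2 * (t + p) := by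
    nlinarith [mul_le_mul_of_nonneg_left hb hκ0, mul_le_mul_of_nonneg_left ht (sq_nonneg κ),
      mul_nonneg (sub_nonneg.2 hκ1) (le_trans (mul_nonneg hκ0 hp) hb)]
  have h3 : 0 ≤ κ ^ 2 * (p - t) * (2 * b - κ ^ 2 * (t + p)) :=
    mul_nonneg (mul_nonneg (sq_nonneg κ) (by linarith)) h2
  linarith

/-- Lemma C: lower bound on the (real-variable) h. -/
lemma hLower (κ b p t : ℝ) (hκ0 : 0 < κ) (hκ1 : κ < 1) (hp : 0 ≤ p)
    (hb : κ * p ≤ b) (htb : b ≤ t) (htp : t ≤ p) :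
    b - κ * p ≤ ((b - κ ^ 2 * t) - Real.sqrt (ovalDelta κ b p t)) / (1 - κ ^ 2) := by
  have hκ2 : 0 < 1 - κ ^ 2 := by nlinarith
  set R := b - κ ^ 2 * t - (1 - κ ^ 2) * (b - κ * p) with hR
  have hR0 : 0 ≤ R := by nlinarith
  have hΔR : ovalDelta κ b p t ≤ R ^ 2 := by
    have : R ^ 2 - ovalDelta κ b p t
        = (1 - κ ^ 2) * (b - κ * p) * (κ ^ 2 * (2 * t - b + κ * p)) := by
      unfold ovalDelta; rw [hR]; ring
    nlinarith [mul_nonneg (mul_nonneg (le_of_lt hκ2) (by linarith : (0:ℝ) ≤ b - κ * p))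
      (mul_nonneg (sq_nonneg κ) (by nlinarith : (0:ℝ) ≤ 2 * t - b + κ * p))]
  have hs : Real.sqrt (ovalDelta κ b p t) ≤ R := by
    calc Real.sqrt (ovalDelta κ b p t) ≤ Real.sqrt (R ^ 2) := Real.sqrt_le_sqrt hΔR
    _ = R := by rw [Real.sqrt_sq hR0]
  rw [le_div_iff₀ hκ2]
  nlinarith

/-- Lemma D: Lipschitz estimate for h in t. -/
lemma hDiff (κ b p t₁ t₂ : ℝ) (hκ0 : 0 < κ) (hκ1 : κ < 1) (hp : 0 < p)
    (hb1 : κ * p < b) (hb2 : b < p)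
    (h1 : b ≤ t₁) (h1' : t₁ ≤ p) (h2 : b ≤ t₂) (h2' : t₂ ≤ p) :
    |((b - κ ^ 2 * t₁) - Real.sqrt (ovalDelta κ b p t₁)) / (1 - κ ^ 2)
      - ((b - κ ^ 2 * t₂) - Real.sqrt (ovalDelta κ b p t₂)) / (1 - κ ^ 2)|
      ≤ (κ ^ 2 + κ * p / (p - b)) / (1 - κ ^ 2) * |t₁ - t₂| := by
  have hκ2 : 0 < 1 - κ ^ 2 := by nlinarith
  have hpb : 0 < p - b := by linarith
  set Δ₁ := ovalDelta κ b p t₁ with hΔ₁def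
  set Δ₂ := ovalDelta κ b p t₂ with hΔ₂def
  have hA1 : κ ^ 2 * (p - b) ^ 2 ≤ Δ₁ := deltaA κ b p t₁ hκ0.le hκ1.le hp.le hb1.le h1'
  have hA2 : κ ^ 2 * (p - b) ^ 2 ≤ Δ₂ := deltaA κ b p t₂ hκ0.le hκ1.le hp.le hb1.le h2'
  have hlb : 0 < κ * (p - b) := by positivity
  set s₁ := Real.sqrt Δ₁ with hs₁def
  set s₂ := Real.sqrt Δ₂ with hs₂def
  have hΔ₁0 : 0 ≤ Δ₁ := le_trans (by positivity) hA1
  have hΔ₂0 : 0 ≤ Δ₂ := le_trans (by positivity) hA2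
  have hs₁ : κ * (p - b) ≤ s₁ := by
    have := Real.sqrt_le_sqrt hA1
    rwa [show κ ^ 2 * (p - b) ^ 2 = (κ * (p - b)) ^ 2 by ring,
      Real.sqrt_sq hlb.le] at this
  have hs₂ : κ * (p - b) ≤ s₂ := by
    have := Real.sqrt_le_sqrt hA2
    rwa [show κ ^ 2 * (p - b) ^ 2 = (κ * (p - b)) ^ 2 by ring,
      Real.sqrt_sq hlb.le] at this
  have hsq₁ : s₁ ^ 2 = Δ₁ := Real.sq_sqrt hΔ₁0
  have hsq₂ : s₂ ^ 2 = Δ₂ := Real.sq_sqrt hΔ₂0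
  -- bound on |Δ₁ - Δ₂|
  have hfac : Δ₁ - Δ₂ = κ ^ 2 * (t₂ - t₁) * (2 * b - κ ^ 2 * (t₁ + t₂)) := by
    rw [hΔ₁def, hΔ₂def]; unfold ovalDelta; ring
  have hmid0 : 0 ≤ 2 * b - κ ^ 2 * (t₁ + t₂) := by nlinarith
  have hmid : 2 * b - κ ^ 2 * (t₁ + t₂) ≤ 2 * p := by nlinarith
  have hΔd : |Δ₁ - Δ₂| ≤ κ ^ 2 * |t₁ - t₂| * (2 * p) := by
    rw [hfac, abs_mul, abs_mul, abs_of_nonneg (sq_nonneg κ), abs_of_nonneg hmid0,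
      abs_sub_comm t₂ t₁]
    have h0 : 0 ≤ κ ^ 2 * |t₁ - t₂| := by positivity
    exact mul_le_mul_of_nonneg_left hmid h0
  -- bound on |s₁ - s₂|
  have hss : (s₁ - s₂) * (s₁ + s₂) = Δ₁ - Δ₂ := by linear_combination hsq₁ - hsq₂
  have hs12 : 2 * (κ * (p - b)) ≤ s₁ + s₂ := by linarith
  have hsd : |s₁ - s₂| ≤ κ * p / (p - b) * |t₁ - t₂| := by
    have habs : |s₁ - s₂| * (s₁ + s₂) = |Δ₁ - Δ₂| := by
      rw [← hss, abs_mul, abs_of_nonneg (by linarith : (0:ℝ) ≤ s₁ + s₂)]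
    have h1 : |s₁ - s₂| * (2 * (κ * (p - b))) ≤ |Δ₁ - Δ₂| := by
      calc |s₁ - s₂| * (2 * (κ * (p - b))) ≤ |s₁ - s₂| * (s₁ + s₂) :=
            mul_le_mul_of_nonneg_left hs12 (abs_nonneg _)
        _ = |Δ₁ - Δ₂| := habs
    have key2 : |s₁ - s₂| * (2 * (κ * (p - b))) ≤ κ ^ 2 * |t₁ - t₂| * (2 * p) :=
      h1.trans hΔd
    have key3 : (2 * κ) * (|s₁ - s₂| * (p - b)) ≤ (2 * κ) * (κ * p * |t₁ - t₂|) := by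
      calc (2 * κ) * (|s₁ - s₂| * (p - b)) = |s₁ - s₂| * (2 * (κ * (p - b))) := by ring
        _ ≤ κ ^ 2 * |t₁ - t₂| * (2 * p) := key2
        _ = (2 * κ) * (κ * p * |t₁ - t₂|) := by ring
    rw [div_mul_eq_mul_div, le_div_iff₀ hpb]
    exact le_of_mul_le_mul_left key3 (by positivity)
  -- conclude
  have hnum : |(κ ^ 2 * (t₂ - t₁) - (s₁ - s₂))|
      ≤ (κ ^ 2 + κ * p / (p - b)) * |t₁ - t₂| := by
    calc |(κ ^ 2 * (t₂ - t₁) - (s₁ - s₂))| ≤ |κ ^ 2 * (t₂ - t₁)| + |s₁ - s₂| :=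
          abs_sub _ _
      _ ≤ κ ^ 2 * |t₁ - t₂| + κ * p / (p - b) * |t₁ - t₂| := by
          rw [abs_mul, abs_of_nonneg (sq_nonneg κ), abs_sub_comm t₂ t₁]
          exact add_le_add le_rfl hsd
      _ = (κ ^ 2 + κ * p / (p - b)) * |t₁ - t₂| := by ring
  have heq : ((b - κ ^ 2 * t₁) - s₁) / (1 - κ ^ 2) - ((b - κ ^ 2 * t₂) - s₂) / (1 - κ ^ 2)
      = (κ ^ 2 * (t₂ - t₁) - (s₁ - s₂)) / (1 - κ ^ 2) := by ring
  rw [heq, abs_div, abs_of_pos hκ2, div_mul_eq_mul_div]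
  exact (div_le_div_iff_of_pos_right hκ2).mpr hnum
/-- Surface measure on the unit sphere of `ℝⁿ`: the `(n−1)`-dimensional Hausdorff measure
restricted to the sphere. -/
noncomputable def sphereMeasure (n : ℕ) : Measure (EuclideanSpace ℝ (Fin n)) :=
  (μH[(n : ℝ) - 1] : Measure (EuclideanSpace ℝ (Fin n))).restrict (Metric.sphere 0 1)

/-- The cone `Q_{r₀} = {tx : x ∈ Ω̄, 0 < t ≤ r₀}`. -/
def coneQ {n : ℕ} (Ω : Set (EuclideanSpace ℝ (Fin n))) (r₀ : ℝ) :
    Set (EuclideanSpace ℝ (Fin n)) :=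
  {Z | ∃ x ∈ closure Ω, ∃ t : ℝ, 0 < t ∧ t ≤ r₀ ∧ Z = t • x}

/-- The oval `O(P,b)` supports the surface given by the radial function `ρ` at the point
`ρ(y)y` (case `κ < 1`): `κ|P| < b < |P|`, `x·P ≥ b` on `Ω̄`, `ρ ≤ h(·,P,b)` on `Ω̄` with
equality at `y`. -/
def SupportsAtLt {n : ℕ} (κ : ℝ) (Ω : Set (EuclideanSpace ℝ (Fin n)))
    (ρ : EuclideanSpace ℝ (Fin n) → ℝ) (P : EuclideanSpace ℝ (Fin n)) (b : ℝ)
    (y : EuclideanSpace ℝ (Fin n)) : Prop :=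
  κ * ‖P‖ < b ∧ b < ‖P‖ ∧ (∀ x ∈ closure Ω, b ≤ ⟪x, P⟫) ∧
    (∀ x ∈ closure Ω, ρ x ≤ ovalH κ b P x) ∧ ρ y = ovalH κ b P y

/-- Near field refractor for `κ < 1` (Definition 5.1): a continuous radial function
`ρ : Ω̄ → (0, r₀]` such that at every point there is a supporting oval with focus in `D`. -/
def IsNearFieldRefractorLt {n : ℕ} (κ r₀ : ℝ) (Ω D : Set (EuclideanSpace ℝ (Fin n)))
    (ρ : EuclideanSpace ℝ (Fin n) → ℝ) : Prop :=
  ContinuousOn ρ (closure Ω) ∧ (∀ x ∈ closure Ω, 0 < ρ x ∧ ρ x ≤ r₀) ∧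
    ∀ y ∈ closure Ω, ∃ P ∈ D, ∃ b : ℝ, SupportsAtLt κ Ω ρ P b y

/-- The near field refractor map `R_S(x)` (case `κ < 1`). -/
def refractorMapLt {n : ℕ} (κ : ℝ) (Ω D : Set (EuclideanSpace ℝ (Fin n)))
    (ρ : EuclideanSpace ℝ (Fin n) → ℝ) (x : EuclideanSpace ℝ (Fin n)) :
    Set (EuclideanSpace ℝ (Fin n)) :=
  {P | P ∈ D ∧ ∃ b : ℝ, SupportsAtLt κ Ω ρ P b x}

/-- `R_S⁻¹(F) = {x ∈ Ω̄ : R_S(x) ∩ F ≠ ∅}` (case `κ < 1`). -/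
def refractorPreimageLt {n : ℕ} (κ : ℝ) (Ω D : Set (EuclideanSpace ℝ (Fin n)))
    (ρ : EuclideanSpace ℝ (Fin n) → ℝ) (F : Set (EuclideanSpace ℝ (Fin n))) :
    Set (EuclideanSpace ℝ (Fin n)) :=
  {x | x ∈ closure Ω ∧ (refractorMapLt κ Ω D ρ x ∩ F).Nonempty}

/-- Lemma 5.3: under (H1) and (H2), every near field refractor (case `κ < 1`) is Lipschitz
on `Ω̄` with a Lipschitz constant depending only on `κ`, `τ`, `r₀` and `sup_{P ∈ D} |P|`. -/
theorem stmt14 (κ τ r₀ M : ℝ) (hκ0 : 0 < κ) (hκ1 : κ < 1) (hτ0 : 0 < τ) (hττ : τ < 1 - κ)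
    (hr0 : 0 < r₀) :
    ∃ L : ℝ, ∀ (n : ℕ), 2 ≤ n → ∀ Ω D : Set (EuclideanSpace ℝ (Fin n)),
      -- Ω is a domain in the unit sphere
      Ω ⊆ Metric.sphere 0 1 →
      (∃ U : Set (EuclideanSpace ℝ (Fin n)), IsOpen U ∧ Ω = U ∩ Metric.sphere 0 1) →
      -- D is compact, 0 ∉ D, with sup_{P ∈ D} |P| ≤ M
      IsCompact D → D.Nonempty → (0 : EuclideanSpace ℝ (Fin n)) ∉ D →
      (∀ P ∈ D, ‖P‖ ≤ M) →
      -- (H1)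
      (∀ x ∈ closure Ω, ∀ P ∈ D, (κ + τ) * ‖P‖ ≤ ⟪x, P⟫) →
      -- (H2)
      r₀ ≤ τ / (1 + κ) * Metric.infDist 0 D →
      (∀ X ∈ coneQ Ω r₀, ∀ m : EuclideanSpace ℝ (Fin n), ‖m‖ = 1 →
        (D ∩ {Z | ∃ t : ℝ, 0 ≤ t ∧ Z = X + t • m}).Subsingleton) →
      -- conclusion: uniform Lipschitz bound
      ∀ ρ : EuclideanSpace ℝ (Fin n) → ℝ, IsNearFieldRefractorLt κ r₀ Ω D ρ →
        ∀ x ∈ closure Ω, ∀ y ∈ closure Ω, |ρ x - ρ y| ≤ L * ‖x - y‖ := by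
  
  refine ⟨(κ ^ 2 + (1 + κ) / (1 - κ)) / (1 - κ ^ 2) * M, ?_⟩
  intro n hn Ω D hΩs _hΩopen _hDc hDne hD0 hDM hH1 hrD _hH2 ρ hρ x hx y hy
  obtain ⟨hcont, hrange, hsupp⟩ := hρ
  have h1κ : (0:ℝ) < 1 - κ := by linarith
  have hκ2 : (0:ℝ) < 1 - κ ^ 2 := by nlinarith
  have hC0 : 0 ≤ (κ ^ 2 + (1 + κ) / (1 - κ)) / (1 - κ ^ 2) :=
    div_nonneg (add_nonneg (sq_nonneg κ) (div_nonneg (by linarith) h1κ.le)) hκ2.le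
  have key : ∀ u ∈ closure Ω, ∀ v ∈ closure Ω,
      ρ u - ρ v ≤ (κ ^ 2 + (1 + κ) / (1 - κ)) / (1 - κ ^ 2) * M * ‖u - v‖ := by
    intro u hu v hv
    obtain ⟨P, hPD, b, hb1, hb2, hb3, hb4, hb5⟩ := hsupp v hv
    have hp0 : (0:ℝ) < ‖P‖ := norm_pos_iff.mpr (fun h => hD0 (h ▸ hPD))
    have hpM : ‖P‖ ≤ M := hDM P hPD
    have hunorm : ‖u‖ = 1 :=
      mem_sphere_zero_iff_norm.mp (closure_minimal hΩs Metric.isClosed_sphere hu)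
    have hvnorm : ‖v‖ = 1 :=
      mem_sphere_zero_iff_norm.mp (closure_minimal hΩs Metric.isClosed_sphere hv)
    have htu_le : ⟪u, P⟫ ≤ ‖P‖ := by
      have := real_inner_le_norm u P; rwa [hunorm, one_mul] at this
    have htv_le : ⟪v, P⟫ ≤ ‖P‖ := by
      have := real_inner_le_norm v P; rwa [hvnorm, one_mul] at this
    have htu_ge : b ≤ ⟪u, P⟫ := hb3 u hu
    have htv_ge : b ≤ ⟪v, P⟫ := hb3 v hv
    -- lower bound on ‖P‖ - b
    have hinf : Metric.infDist 0 D ≤ ‖P‖ := by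
      have := Metric.infDist_le_dist_of_mem (x := (0 : EuclideanSpace ℝ (Fin n))) hPD
      rwa [dist_zero_left] at this
    have hrp : r₀ ≤ τ / (1 + κ) * ‖P‖ :=
      le_trans hrD (mul_le_mul_of_nonneg_left hinf (by positivity))
    have hlow : b - κ * ‖P‖ ≤ ρ v := by
      rw [hb5]
      exact hLower κ b ‖P‖ ⟪v, P⟫ hκ0 hκ1 hp0.le hb1.le htv_ge htv_le
    have hρv : ρ v ≤ r₀ := (hrange v hv).2
    have h1k : (0:ℝ) < 1 + κ := by linarith
    have hpb : κ * (1 - κ) * ‖P‖ ≤ (‖P‖ - b) * (1 + κ) := by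
      have h1 : b - κ * ‖P‖ ≤ τ / (1 + κ) * ‖P‖ := by linarith
      have h1' : (b - κ * ‖P‖) * (1 + κ) ≤ τ * ‖P‖ := by
        have he : τ / (1 + κ) * ‖P‖ * (1 + κ) = τ * ‖P‖ := by field_simp
        have := mul_le_mul_of_nonneg_right h1 h1k.le
        linarith [this.trans_eq he]
      nlinarith [h1', mul_pos hp0 (show (0:ℝ) < 1 - κ - τ by linarith)]
    have hd := hDiff κ b ‖P‖ ⟪u, P⟫ ⟪v, P⟫ hκ0 hκ1 hp0 hb1 hb2 htu_ge htu_le htv_ge htv_le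
    have hC'0 : 0 ≤ (κ ^ 2 + κ * ‖P‖ / (‖P‖ - b)) / (1 - κ ^ 2) := by
      have : (0:ℝ) < ‖P‖ - b := by linarith
      positivity
    have step1 : ρ u - ρ v
        ≤ (κ ^ 2 + κ * ‖P‖ / (‖P‖ - b)) / (1 - κ ^ 2) * |⟪u, P⟫ - ⟪v, P⟫| := by
      have h4 : ρ u ≤ ovalH κ b P u := hb4 u hu
      have habs : ovalH κ b P u - ovalH κ b P v
          ≤ (κ ^ 2 + κ * ‖P‖ / (‖P‖ - b)) / (1 - κ ^ 2) * |⟪u, P⟫ - ⟪v, P⟫| :=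
        le_trans (le_abs_self _) hd
      calc ρ u - ρ v ≤ ovalH κ b P u - ovalH κ b P v := by rw [hb5]; linarith
        _ ≤ _ := habs
    have hip : |⟪u, P⟫ - ⟪v, P⟫| ≤ ‖u - v‖ * ‖P‖ := by
      rw [← inner_sub_left]
      exact abs_real_inner_le_norm (u - v) P
    have hconst : (κ ^ 2 + κ * ‖P‖ / (‖P‖ - b)) / (1 - κ ^ 2)
        ≤ (κ ^ 2 + (1 + κ) / (1 - κ)) / (1 - κ ^ 2) := by
      have hpbpos : (0:ℝ) < ‖P‖ - b := by linarith
      have h1 : κ * ‖P‖ / (‖P‖ - b) ≤ (1 + κ) / (1 - κ) := by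
        rw [div_le_div_iff₀ hpbpos h1κ]
        nlinarith [hpb]
      exact (div_le_div_iff_of_pos_right hκ2).mpr (by linarith)
    calc ρ u - ρ v
        ≤ (κ ^ 2 + κ * ‖P‖ / (‖P‖ - b)) / (1 - κ ^ 2) * |⟪u, P⟫ - ⟪v, P⟫| := step1
      _ ≤ (κ ^ 2 + κ * ‖P‖ / (‖P‖ - b)) / (1 - κ ^ 2) * (‖u - v‖ * ‖P‖) :=
          mul_le_mul_of_nonneg_left hip hC'0
      _ ≤ (κ ^ 2 + (1 + κ) / (1 - κ)) / (1 - κ ^ 2) * (‖u - v‖ * ‖P‖) :=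
          mul_le_mul_of_nonneg_right hconst (by positivity)
      _ ≤ (κ ^ 2 + (1 + κ) / (1 - κ)) / (1 - κ ^ 2) * (‖u - v‖ * M) := by
          apply mul_le_mul_of_nonneg_left _ hC0
          exact mul_le_mul_of_nonneg_left hpM (norm_nonneg _)
      _ = (κ ^ 2 + (1 + κ) / (1 - κ)) / (1 - κ ^ 2) * M * ‖u - v‖ := by ring
  rw [abs_sub_le_iff]
  refine ⟨key x hx y hy, ?_⟩
  have := key y hy x hx
  rwa [norm_sub_rev] at this
end
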